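/- arXiv:2506.10392 — 4 statements merged into one kernel-verified Lean document; each statement's English description precedes it below -/
import Mathlib

section
/- Let R be a commutative ring with identity and M a unitary R-module, and let R*M denote the Nagata idealization (the ring R × M with multiplication (r₁,m₁)(r₂,m₂) = (r₁r₂, r₁m₂ + r₂m₁)). Then the set of zero divisors of R*M equals (Z(R) ∪ Z(M)) × M, where Z(M) = {r ∈ R : rm = 0 for some nonzero m ∈ M}. -/
theorem stmt_12 (R M : Type*) [CommRing R] [AddCommGroup M] [Module R M]
    [Module Rᵐᵒᵖ M] [IsCentralScalar R M] :
    {z : TrivSqZeroExt R M | ∃ w, w ≠ 0 ∧ z * w = 0} =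
      {z : TrivSqZeroExt R M |
        (∃ y : R, y ≠ 0 ∧ z.fst * y = 0) ∨ (∃ m : M, m ≠ 0 ∧ z.fst • m = 0)} := by
  ext z
  simp only [Set.mem_setOf_eq]
  constructor
  · rintro ⟨w, hw, hzw⟩
    have h1 : z.fst * w.fst = 0 := by
      have := congrArg TrivSqZeroExt.fst hzw
      simpa using this
    have h2 : z.fst • w.snd + MulOpposite.op w.fst • z.snd = 0 := by
      have := congrArg TrivSqZeroExt.snd hzw
      simpa [TrivSqZeroExt.snd_mul] using this
    by_cases hf : w.fst = 0
    · right
      refine ⟨w.snd, ?_, ?_⟩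
      · intro hs
        exact hw (TrivSqZeroExt.ext hf hs)
      · simpa [hf] using h2
    · left
      exact ⟨w.fst, hf, h1⟩
  · rintro (⟨y, hy, hzy⟩ | ⟨m, hm, hzm⟩)
    · by_cases hym : y • z.snd = 0
      · refine ⟨TrivSqZeroExt.inl y, ?_, ?_⟩
        · exact fun h => hy (by simpa using congrArg TrivSqZeroExt.fst h)
        · refine TrivSqZeroExt.ext ?_ ?_
          · simpa [TrivSqZeroExt.fst_mul] using hzy
          · simp [TrivSqZeroExt.snd_mul, op_smul_eq_smul, hym]
      · refine ⟨TrivSqZeroExt.inr (y • z.snd), ?_, ?_⟩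
        · exact fun h => hym (by simpa using congrArg TrivSqZeroExt.snd h)
        · refine TrivSqZeroExt.ext ?_ ?_
          · simp [TrivSqZeroExt.fst_mul]
          · simp only [TrivSqZeroExt.snd_mul, TrivSqZeroExt.fst_inr,
              TrivSqZeroExt.snd_inr, smul_smul]
            simp [hzy]
    · refine ⟨TrivSqZeroExt.inr m, ?_, ?_⟩
      · exact fun h => hm (by simpa using congrArg TrivSqZeroExt.snd h)
      · refine TrivSqZeroExt.ext ?_ ?_
        · simp [TrivSqZeroExt.fst_mul]
        · simp [TrivSqZeroExt.snd_mul, hzm]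
end

section
/- Let p be a prime, α ≥ 1 an integer, and R = Z_p * (Z_p)^{α-1} the Nagata idealization of the Z_p-module (Z_p)^{α-1}. Then for every integer k ≥ 2, zp_k(R) = (p^{α-1}(p^k - (k+p-1)(p-1)^{k-1}) + k(p-1)^{k-1}) / p^{k+α-1}. -/
open TrivSqZeroExt Finset

private theorem fstp {ι A M : Type*} [CommRing A] [AddCommGroup M] [Module A M]
    [Module Aᵐᵒᵖ M] [IsCentralScalar A M] (s : Finset ι) (f : ι → TrivSqZeroExt A M) :
    (∏ i ∈ s, f i).fst = ∏ i ∈ s, (f i).fst := by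
  classical
  induction s using Finset.induction with
  | empty => simp
  | @insert _ _ h ih => simp [Finset.prod_insert h, fst_mul, ih]

private theorem sndp {ι A M : Type*} [DecidableEq ι] [CommRing A] [AddCommGroup M] [Module A M]
    [Module Aᵐᵒᵖ M] [IsCentralScalar A M] (s : Finset ι) (f : ι → TrivSqZeroExt A M) :
    (∏ i ∈ s, f i).snd = ∑ i ∈ s, (∏ j ∈ s.erase i, (f j).fst) • (f i).snd := by
  induction s using Finset.induction with
  | empty => simp
  | @insert a s ha ih =>
    rw [Finset.prod_insert ha, snd_mul, ih, fstp, Finset.sum_insert ha, Finset.erase_insert ha]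
    rw [op_smul_eq_smul, Finset.smul_sum, add_comm]
    congr 1
    apply Finset.sum_congr rfl
    intro i hi
    rw [Finset.erase_insert_of_ne (by rintro rfl; exact ha hi),
      Finset.prod_insert (fun h => ha (Finset.mem_of_mem_erase h)), smul_smul]

private theorem kercard {F M ι : Type*} [Field F] [AddCommGroup M] [Module F M] [Finite M]
    [Fintype ι] (c : ι → F) (i₀ : ι) (hc : c i₀ ≠ 0) :
    Nat.card {m : ι → M // ∑ i, c i • m i = 0} * Nat.card M = Nat.card (ι → M) := by
  classical
  let φ : (ι → M) →+ M :=
    { toFun := fun m => ∑ i, c i • m i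
      map_zero' := by simp
      map_add' := fun x y => by simp [smul_add, Finset.sum_add_distrib] }
  have hsurj : Function.Surjective φ := by
    intro x
    refine ⟨Pi.single i₀ ((c i₀)⁻¹ • x), ?_⟩
    show ∑ i, c i • Pi.single i₀ ((c i₀)⁻¹ • x) i = x
    rw [Finset.sum_eq_single i₀]
    · rw [Pi.single_eq_same, smul_smul, mul_inv_cancel₀ hc, one_smul]
    · intro i _ hi
      rw [Pi.single_eq_of_ne hi, smul_zero]
    · simp
  have h1 : Nat.card (ι → M) = Nat.card ((ι → M) ⧸ φ.ker) * Nat.card φ.ker :=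
    AddSubgroup.card_eq_card_quotient_mul_card_addSubgroup _
  have h2 : Nat.card ((ι → M) ⧸ φ.ker) = Nat.card M :=
    Nat.card_congr (QuotientAddGroup.quotientKerEquivOfSurjective φ hsurj).toEquiv
  have h3 : Nat.card {m : ι → M // ∑ i, c i • m i = 0} = Nat.card φ.ker :=
    Nat.card_congr (Equiv.subtypeEquivRight fun m => by
      simp [φ, AddMonoidHom.mem_ker])
  rw [h3, h1, h2, mul_comm]

section aux
variable (p k : ℕ)

private def PA (r : Fin k → ZMod p) : Prop := ∀ i, ∃ j, j ≠ i ∧ r j = 0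
private def PB (r : Fin k → ZMod p) : Prop := ∃ i, r i = 0 ∧ ∀ j, j ≠ i → r j ≠ 0
private def PC (r : Fin k → ZMod p) : Prop := ∀ i, r i ≠ 0

variable {p k}

private theorem PB_not_PA {r : Fin k → ZMod p} (h : PB p k r) : ¬ PA p k r := by
  obtain ⟨i, hi0, hi⟩ := h
  intro hPA
  obtain ⟨j, hj, hj0⟩ := hPA i
  exact hi j hj hj0

private theorem not_not_PC (hk : 1 ≤ k) {r : Fin k → ZMod p}
    (hA : ¬ PA p k r) (hB : ¬ PB p k r) : PC p k r := by
  by_contra h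
  simp only [PC, not_forall, not_not] at h
  obtain ⟨i₁, hi₁⟩ := h
  by_cases hall : ∀ j, j ≠ i₁ → r j ≠ 0
  · exact hB ⟨i₁, hi₁, hall⟩
  push_neg at hall
  obtain ⟨j₁, hj₁, hj₁0⟩ := hall
  apply hA
  intro i
  by_cases hii : i = i₁
  · exact ⟨j₁, hii ▸ hj₁, hj₁0⟩
  · exact ⟨i₁, fun h => hii h.symm, hi₁⟩

private theorem PC_not_PA (hk : 1 ≤ k) {r : Fin k → ZMod p} (h : PC p k r) : ¬ PA p k r := by
  intro hPA
  obtain ⟨j, _, hj0⟩ := hPA ⟨0, hk⟩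
  exact h j hj0

private theorem PC_not_PB {r : Fin k → ZMod p} (h : PC p k r) : ¬ PB p k r := by
  rintro ⟨i, hi0, -⟩; exact h i hi0

end aux

private theorem card_ne {β : Type*} [Fintype β] [DecidableEq β] (a : β) :
    Fintype.card {x : β // x ≠ a} = Fintype.card β - 1 := by
  have := Fintype.card_subtype_compl (fun x : β => x = a)
  simpa [Fintype.card_subtype_eq] using this

private theorem countC (p k : ℕ) (hp : p.Prime) :
    Nat.card {r : Fin k → ZMod p // PC p k r} = (p - 1) ^ k := by
  haveI : Fact p.Prime := ⟨hp⟩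
  have e : {r : Fin k → ZMod p // PC p k r} ≃ (Fin k → {x : ZMod p // x ≠ 0}) :=
    Equiv.subtypePiEquivPi (p := fun _ x => x ≠ 0)
  rw [Nat.card_congr e, Nat.card_eq_fintype_card, Fintype.card_fun, card_ne, ZMod.card,
    Fintype.card_fin]

private theorem countB (p k : ℕ) (hp : p.Prime) :
    Nat.card {r : Fin k → ZMod p // PB p k r} = k * (p - 1) ^ (k - 1) := by
  haveI : Fact p.Prime := ⟨hp⟩
  classical
  rw [Nat.card_eq_fintype_card, Fintype.card_subtype]
  have hsplit : (univ.filter (PB p k)) =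
      univ.biUnion fun i : Fin k =>
        univ.filter fun r : Fin k → ZMod p => r i = 0 ∧ ∀ j, j ≠ i → r j ≠ 0 := by
    ext r
    simp [PB]
  rw [hsplit, Finset.card_biUnion]
  · have hone : ∀ i : Fin k,
        (univ.filter fun r : Fin k → ZMod p => r i = 0 ∧ ∀ j, j ≠ i → r j ≠ 0).card
          = (p - 1) ^ (k - 1) := by
      intro i
      rw [← Fintype.card_subtype]
      have e : {r : Fin k → ZMod p // r i = 0 ∧ ∀ j, j ≠ i → r j ≠ 0} ≃
          ({j : Fin k // j ≠ i} → {x : ZMod p // x ≠ 0}) := by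
        refine ⟨fun r j => ⟨r.1 j.1, r.2.2 j.1 j.2⟩,
          fun g => ⟨fun j => if h : j = i then 0 else (g ⟨j, h⟩).1, ?_, ?_⟩, ?_, ?_⟩
        · simp
        · intro j hj
          simpa [hj] using (g ⟨j, hj⟩).2
        · intro r
          ext j
          by_cases h : j = i
          · subst h; simp [r.2.1]
          · simp [h]
        · intro g
          ext j
          simp [j.2]
      rw [Fintype.card_congr e, Fintype.card_fun, card_ne, card_ne, ZMod.card, Fintype.card_fin]
    rw [Finset.sum_congr rfl fun i _ => hone i, Finset.sum_const, card_univ, Fintype.card_fin,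
      smul_eq_mul]
  · intro i _ i' _ hii
    rw [Function.onFun, Finset.disjoint_left]
    intro r hr hr'
    simp only [Finset.mem_filter, Finset.mem_univ, true_and] at hr hr'
    exact hr'.2 i hii hr.1

private theorem partcard (p k : ℕ) (hp : p.Prime) (hk : 1 ≤ k) :
    Nat.card {r : Fin k → ZMod p // PA p k r} + Nat.card {r : Fin k → ZMod p // PB p k r}
      + Nat.card {r : Fin k → ZMod p // PC p k r} = p ^ k := by
  haveI : Fact p.Prime := ⟨hp⟩
  classical
  simp only [Nat.card_eq_fintype_card, Fintype.card_subtype]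
  have h1 : (univ.filter (PA p k)).card + (univ.filter (fun r => ¬ PA p k r)).card
      = Fintype.card (Fin k → ZMod p) := by
    rw [Finset.card_filter_add_card_filter_not, card_univ]
  have h2 : (univ.filter (fun r : Fin k → ZMod p => ¬ PA p k r)).card
      = (univ.filter (PB p k)).card + (univ.filter (PC p k)).card := by
    rw [← Finset.card_filter_add_card_filter_not (p := PB p k)
      (s := univ.filter (fun r => ¬ PA p k r)), Finset.filter_filter, Finset.filter_filter]
    congr 1
    · congr 1
      apply Finset.filter_congr
      intro r _
      constructor
      · exact fun h => h.2
      · exact fun h => ⟨PB_not_PA h, h⟩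
    · congr 1
      apply Finset.filter_congr
      intro r _
      constructor
      · exact fun h => not_not_PC hk h.1 h.2
      · exact fun h => ⟨PC_not_PA hk h, PC_not_PB h⟩
  rw [add_assoc, ← h2, h1, Fintype.card_fun, ZMod.card, Fintype.card_fin]


private theorem countmain (p : ℕ) (hp : p.Prime) (α k : ℕ) (hk : 2 ≤ k) :
    Nat.card {f : Fin k → TrivSqZeroExt (ZMod p) (Fin (α - 1) → ZMod p) // ∏ i, f i = 0}
      = Nat.card {r : Fin k → ZMod p // PA p k r} * (p ^ (α - 1)) ^ k
        + Nat.card {r : Fin k → ZMod p // PB p k r} * (p ^ (α - 1)) ^ (k - 1) := by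
  haveI : Fact p.Prime := ⟨hp⟩
  classical
  have hk1 : 1 ≤ k := by omega
  have hk0 : 0 < k := by omega
  have hkk : k - 1 + 1 = k := by omega
  have hcM : Nat.card (Fin (α - 1) → ZMod p) = p ^ (α - 1) := by
    rw [Nat.card_fun, Nat.card_zmod, Nat.card_eq_fintype_card, Fintype.card_fin]
  have hcMk : Nat.card (Fin k → Fin (α - 1) → ZMod p) = (p ^ (α - 1)) ^ k := by
    rw [Nat.card_fun, hcM, Nat.card_eq_fintype_card, Fintype.card_fin]
  have hcMkF : Fintype.card (Fin k → Fin (α - 1) → ZMod p) = (p ^ (α - 1)) ^ k := by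
    rw [← Nat.card_eq_fintype_card, hcMk]
  have e1 : {f : Fin k → TrivSqZeroExt (ZMod p) (Fin (α - 1) → ZMod p) // ∏ i, f i = 0} ≃
      {rm : (Fin k → ZMod p) × (Fin k → Fin (α - 1) → ZMod p) //
        (∏ i, rm.1 i) = 0 ∧ ∑ i, (∏ j ∈ univ.erase i, rm.1 j) • rm.2 i = 0} := by
    refine ⟨fun f => ⟨(fun i => (f.1 i).fst, fun i => (f.1 i).snd), ?_, ?_⟩,
        fun rm => ⟨fun i => TrivSqZeroExt.inl (rm.1.1 i) + TrivSqZeroExt.inr (rm.1.2 i), ?_⟩,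
        fun f => ?_, fun rm => ?_⟩
    · have := congrArg TrivSqZeroExt.fst f.2
      rwa [fstp univ f.1, fst_zero] at this
    · have := congrArg TrivSqZeroExt.snd f.2
      rwa [sndp univ f.1, snd_zero] at this
    · apply TrivSqZeroExt.ext
      · rw [fstp]; simpa using rm.2.1
      · rw [sndp]; simpa using rm.2.2
    · apply Subtype.ext
      funext i
      simp [TrivSqZeroExt.inl_fst_add_inr_snd_eq]
    · apply Subtype.ext
      refine Prod.ext ?_ ?_ <;> funext i <;> simp
  have e2 := Equiv.subtypeProdEquivSigmaSubtype
    (fun (r : Fin k → ZMod p) (m : Fin k → Fin (α - 1) → ZMod p) =>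
      (∏ i, r i) = 0 ∧ ∑ i, (∏ j ∈ univ.erase i, r j) • m i = 0)
  rw [Nat.card_congr (e1.trans e2), Nat.card_eq_fintype_card, Fintype.card_sigma]
  have key : ∀ r : Fin k → ZMod p,
      Fintype.card {m : Fin k → Fin (α - 1) → ZMod p //
          (∏ i, r i) = 0 ∧ ∑ i, (∏ j ∈ univ.erase i, r j) • m i = 0}
        = if PA p k r then (p ^ (α - 1)) ^ k
          else if PB p k r then (p ^ (α - 1)) ^ (k - 1) else 0 := by
    intro r
    by_cases hA : PA p k r
    · rw [if_pos hA]
      have h0 : (∏ i, r i) = 0 := by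
        obtain ⟨j, -, hj⟩ := hA ⟨0, hk0⟩
        exact Finset.prod_eq_zero (mem_univ j) hj
      have hc : ∀ i, (∏ j ∈ univ.erase i, r j) = 0 := by
        intro i
        obtain ⟨j, hji, hj⟩ := hA i
        exact Finset.prod_eq_zero (Finset.mem_erase.2 ⟨hji, mem_univ j⟩) hj
      have e : {m : Fin k → Fin (α - 1) → ZMod p //
          (∏ i, r i) = 0 ∧ ∑ i, (∏ j ∈ univ.erase i, r j) • m i = 0}
            ≃ (Fin k → Fin (α - 1) → ZMod p) :=
        Equiv.subtypeUnivEquiv (fun m => ⟨h0, by simp [hc]⟩)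
      rw [Fintype.card_congr e, hcMkF]
    · by_cases hB : PB p k r
      · rw [if_neg hA, if_pos hB]
        obtain ⟨i₀, hi₀, hne⟩ := hB
        have h0 : (∏ i, r i) = 0 := Finset.prod_eq_zero (mem_univ i₀) hi₀
        have hc : (∏ j ∈ univ.erase i₀, r j) ≠ 0 := by
          rw [Finset.prod_ne_zero_iff]
          intro j hj
          exact hne j (Finset.mem_erase.1 hj).1
        have e : {m : Fin k → Fin (α - 1) → ZMod p //
            (∏ i, r i) = 0 ∧ ∑ i, (∏ j ∈ univ.erase i, r j) • m i = 0}
              ≃ {m : Fin k → Fin (α - 1) → ZMod p //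
                ∑ i, (∏ j ∈ univ.erase i, r j) • m i = 0} :=
          Equiv.subtypeEquivRight (fun m => and_iff_right h0)
        have hker := kercard (M := Fin (α - 1) → ZMod p)
          (fun i => ∏ j ∈ univ.erase i, r j) i₀ hc
        rw [hcM, hcMk] at hker
        have hm0 : 0 < p ^ (α - 1) := Nat.pow_pos hp.pos
        have hpow : (p ^ (α - 1)) ^ (k - 1) * p ^ (α - 1) = (p ^ (α - 1)) ^ k := by
          rw [← pow_succ, hkk]
        have hker' : Nat.card {m : Fin k → Fin (α - 1) → ZMod p //
            ∑ i, (∏ j ∈ univ.erase i, r j) • m i = 0} * p ^ (α - 1) = (p ^ (α - 1)) ^ k := hker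
        rw [Nat.card_eq_fintype_card] at hker'
        rw [Fintype.card_congr e]
        exact Nat.eq_of_mul_eq_mul_right hm0 (hker'.trans hpow.symm)
      · rw [if_neg hA, if_neg hB]
        have hPC := not_not_PC (p := p) hk1 hA hB
        have h0 : (∏ i, r i) ≠ 0 := Finset.prod_ne_zero_iff.2 fun i _ => hPC i
        rw [Fintype.card_eq_zero_iff]
        exact ⟨fun m => h0 m.2.1⟩
  rw [Finset.sum_congr rfl (fun r _ => key r),
    ← Finset.sum_filter_add_sum_filter_not univ (PA p k)]
  have t1 : ∑ r ∈ univ.filter (PA p k),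
      (if PA p k r then (p ^ (α - 1)) ^ k
        else if PB p k r then (p ^ (α - 1)) ^ (k - 1) else 0)
      = (univ.filter (PA p k)).card * (p ^ (α - 1)) ^ k := by
    rw [Finset.sum_congr rfl (fun r hr => by rw [if_pos (Finset.mem_filter.1 hr).2]),
      Finset.sum_const, smul_eq_mul]
  have t2 : ∑ r ∈ univ.filter (fun r => ¬ PA p k r),
      (if PA p k r then (p ^ (α - 1)) ^ k
        else if PB p k r then (p ^ (α - 1)) ^ (k - 1) else 0)
      = (univ.filter (PB p k)).card * (p ^ (α - 1)) ^ (k - 1) := by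
    rw [Finset.sum_congr rfl
      (fun r hr => by rw [if_neg (Finset.mem_filter.1 hr).2]),
      ← Finset.sum_filter, Finset.sum_const, smul_eq_mul, Finset.filter_filter]
    congr 2
    apply Finset.filter_congr
    intro r _
    exact ⟨fun h => h.2, fun h => ⟨PB_not_PA h, h⟩⟩
  rw [t1, t2, Nat.card_eq_fintype_card, Nat.card_eq_fintype_card,
    Fintype.card_subtype, Fintype.card_subtype]

theorem stmt_13 (p : ℕ) (hp : p.Prime) (α : ℕ) (hα : 1 ≤ α) (k : ℕ) (hk : 2 ≤ k) :
    (Nat.card {f : Fin k → TrivSqZeroExt (ZMod p) (Fin (α - 1) → ZMod p) // ∏ i, f i = 0} : ℝ)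
        / (Nat.card (TrivSqZeroExt (ZMod p) (Fin (α - 1) → ZMod p)) : ℝ) ^ k
      = ((p : ℝ) ^ (α - 1) * ((p : ℝ) ^ k - (k + p - 1) * ((p : ℝ) - 1) ^ (k - 1))
          + k * ((p : ℝ) - 1) ^ (k - 1)) / (p : ℝ) ^ (k + α - 1) := by
  haveI : Fact p.Prime := ⟨hp⟩
  obtain ⟨b, rfl⟩ : ∃ b, k = b + 1 := ⟨k - 1, by omega⟩
  obtain ⟨a, rfl⟩ : ∃ a, α = a + 1 := ⟨α - 1, by omega⟩
  have hb1 : 1 ≤ b := by omega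
  have hR : Nat.card (TrivSqZeroExt (ZMod p) (Fin (a + 1 - 1) → ZMod p)) = p ^ (a + 1) := by
    have h1 : Nat.card (TrivSqZeroExt (ZMod p) (Fin (a + 1 - 1) → ZMod p))
        = Nat.card (ZMod p × (Fin (a + 1 - 1) → ZMod p)) := rfl
    rw [h1, Nat.card_prod, Nat.card_zmod, Nat.card_fun, Nat.card_zmod,
      Nat.card_eq_fintype_card, Fintype.card_fin]
    simp [pow_succ, mul_comm]
  rw [countmain p hp (a + 1) (b + 1) (by omega), hR]
  have hB := countB p (b + 1) hp
  have hC := countC p (b + 1) hp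
  have hpart := partcard p (b + 1) hp (by omega)
  simp only [Nat.add_sub_cancel] at hB hC
  rw [hB, hC] at hpart
  set cA := Nat.card {r : Fin (b + 1) → ZMod p // PA p (b + 1) r} with hcA
  have hP1 : (1 : ℝ) ≤ (p : ℝ) := by exact_mod_cast hp.one_lt.le
  have hP0 : (0 : ℝ) < (p : ℝ) := by positivity
  have hcast : (cA : ℝ) = (p : ℝ) ^ (b + 1) - ((b : ℝ) + 1) * ((p : ℝ) - 1) ^ b
      - ((p : ℝ) - 1) ^ (b + 1) := by
    have := congrArg (fun n : ℕ => (n : ℝ)) hpart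
    push_cast [Nat.cast_sub hp.pos] at this
    linarith
  rw [hB]
  simp only [Nat.add_sub_cancel]
  push_cast [Nat.cast_sub hp.pos, hcast]
  rw [div_eq_div_iff (by positivity) (by positivity)]
  have hexp : b + 1 + (a + 1) - 1 = a + b + 1 := by omega
  rw [hexp]
  ring
end

section
/- Let p be a prime and k, α positive integers with k ≥ 2. Define B_k(p;α) = (p^{α-1}(p^k - (k+p-1)(p-1)^{k-1}) + k(p-1)^{k-1}) / p^{k+α-1}. Then B_k(p;α) is strictly decreasing in p for fixed k, α (i.e., if p₁ < p₂ are primes then B_k(p₁;α) > B_k(p₂;α)). -/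
/-- `B_k(p; α) = (p^{α-1}(p^k - (k+p-1)(p-1)^{k-1}) + k(p-1)^{k-1}) / p^{k+α-1}`. -/
noncomputable def B (k p α : ℕ) : ℝ :=
  ((p : ℝ) ^ (α - 1) * ((p : ℝ) ^ k - ((k : ℝ) + p - 1) * ((p : ℝ) - 1) ^ (k - 1))
      + (k : ℝ) * ((p : ℝ) - 1) ^ (k - 1)) / (p : ℝ) ^ (k + α - 1)

lemma f_anti (n m : ℕ) :
    StrictAntiOn (fun x : ℝ => (1-x)^(n+1) * (1 + ((n:ℝ)+1)*x - ((n:ℝ)+2)*x^(m+1)))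
      (Set.Icc (0:ℝ) 1) := by
  apply strictAntiOn_of_deriv_neg (convex_Icc 0 1)
  · fun_prop
  · intro x hx
    rw [interior_Icc, Set.mem_Ioo] at hx
    have h1 : HasDerivAt (fun x : ℝ => (1-x)^(n+1))
        (((n+1:ℕ):ℝ)*(1-x)^n * (-1)) x := by
      have := (((hasDerivAt_id x).const_sub 1).pow (n+1))
      simp at this ⊢; exact this
    have h2 : HasDerivAt (fun x : ℝ => 1 + ((n:ℝ)+1)*x - ((n:ℝ)+2)*x^(m+1))
        (((n:ℝ)+1) - ((n:ℝ)+2) * (((m+1:ℕ):ℝ) * x^m)) x := by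
      have hpow : HasDerivAt (fun x : ℝ => x^(m+1)) (((m+1:ℕ):ℝ) * x^m) x := by
        simpa using (hasDerivAt_pow (m+1) x)
      have := (((hasDerivAt_id x).const_mul ((n:ℝ)+1)).const_add 1).sub (hpow.const_mul ((n:ℝ)+2))
      simp at this ⊢; exact this
    have hd := (h1.mul h2)
    rw [show deriv (fun x : ℝ => (1-x)^(n+1) * (1 + ((n:ℝ)+1)*x - ((n:ℝ)+2)*x^(m+1))) x = _ from hd.deriv]
    have heq : ((n+1:ℕ):ℝ)*(1-x)^n * (-1) * (1 + ((n:ℝ)+1)*x - ((n:ℝ)+2)*x^(m+1))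
        + (1-x)^(n+1) * (((n:ℝ)+1) - ((n:ℝ)+2) * (((m+1:ℕ):ℝ) * x^m))
        = -(((n:ℝ)+2) * ((1-x)^n * (((n:ℝ)+1)*x*(1-x^m) + ((m:ℝ)+1)*x^m*(1-x)))) := by
      push_cast; ring
    rw [heq]
    have h01 : (0:ℝ) < 1 - x := by linarith [hx.2]
    have hxm : x^m ≤ 1 := pow_le_one₀ hx.1.le hx.2.le
    have hxmpos : 0 < x^m := pow_pos hx.1 m
    have hA : 0 ≤ ((n:ℝ)+1)*x*(1-x^m) := by
      apply mul_nonneg (mul_nonneg (by positivity) hx.1.le); linarith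
    have hB : 0 < ((m:ℝ)+1)*x^m*(1-x) := by
      apply mul_pos (mul_pos (by positivity) hxmpos) h01
    have hC : 0 < (1-x)^n := pow_pos h01 n
    nlinarith [mul_pos hC (by linarith : (0:ℝ) < ((n:ℝ)+1)*x*(1-x^m) + ((m:ℝ)+1)*x^m*(1-x))]

lemma B_eq (n m p : ℕ) (hp : 2 ≤ p) :
    B (n+2) p (m+1)
      = 1 - (1-(1:ℝ)/p)^(n+1) * (1 + ((n:ℝ)+1)*(1/p) - ((n:ℝ)+2)*((1:ℝ)/p)^(m+1)) := by
  have hp0 : (0:ℝ) < (p:ℝ) := by positivity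
  have hp0' : (p:ℝ) ≠ 0 := hp0.ne'
  unfold B
  have e1 : n + 2 - 1 = n + 1 := rfl
  have e2 : m + 1 - 1 = m := rfl
  have e3 : n + 2 + (m + 1) - 1 = n + m + 2 := by omega
  rw [e1, e2, e3]
  rw [one_sub_div hp0', div_pow, div_pow]
  field_simp
  push_cast
  ring

theorem stmt_14 (k p₁ p₂ α : ℕ) (hk : 2 ≤ k) (hα : 1 ≤ α)
    (hp₁ : p₁.Prime) (hp₂ : p₂.Prime) (h : p₁ < p₂) :
    B k p₁ α > B k p₂ α := by
  obtain ⟨n, rfl⟩ : ∃ n, k = n + 2 := ⟨k - 2, by omega⟩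
  obtain ⟨m, rfl⟩ : ∃ m, α = m + 1 := ⟨α - 1, by omega⟩
  have h1 : 2 ≤ p₁ := hp₁.two_le
  have h2 : 2 ≤ p₂ := hp₂.two_le
  have hr1 : (0:ℝ) < (p₁:ℝ) := by positivity
  have hr2 : (0:ℝ) < (p₂:ℝ) := by positivity
  rw [B_eq n m p₁ h1, B_eq n m p₂ h2]
  have hm1 : (1:ℝ)/p₁ ∈ Set.Icc (0:ℝ) 1 := by
    constructor
    · positivity
    · rw [div_le_one hr1]; exact_mod_cast Nat.one_le_of_lt h1
  have hm2 : (1:ℝ)/p₂ ∈ Set.Icc (0:ℝ) 1 := by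
    constructor
    · positivity
    · rw [div_le_one hr2]; exact_mod_cast Nat.one_le_of_lt h2
  have hlt : (1:ℝ)/p₂ < 1/p₁ := by
    apply one_div_lt_one_div_of_lt hr1
    exact_mod_cast h
  have := f_anti n m hm2 hm1 hlt
  simp only at this
  linarith
end

section
/- With B_k(p;α) = (p^{α-1}(p^k - (k+p-1)(p-1)^{k-1}) + k(p-1)^{k-1}) / p^{k+α-1}: for k = 2 and k = 3 we have B_k(3;1) > B_k(2;2), while for every integer k ≥ 4 we have B_k(3;1) < B_k(2;2). Equivalently, (3^k - 2^k)/3^k > (2^{k+1} - k - 2)/2^{k+1} holds exactly for k ∈ {2,3} among integers k ≥ 2. -/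
lemma key_nat : ∀ k : ℕ, 4 ≤ k → (k + 2) * 3 ^ k < 2 * 4 ^ k := by
  intro k hk
  induction k with
  | zero => omega
  | succ n ih =>
    rcases Nat.lt_or_ge n 4 with h | h
    · interval_cases n <;> first | omega | norm_num
    · have h1 := ih (by omega)
      have h2 : (n + 1 + 2) * 3 ^ (n + 1) ≤ 4 * ((n + 2) * 3 ^ n) := by
        rw [pow_succ]
        nlinarith [pow_pos (by norm_num : 0 < 3) n]
      calc (n + 1 + 2) * 3 ^ (n + 1) ≤ 4 * ((n + 2) * 3 ^ n) := h2
        _ < 4 * (2 * 4 ^ n) := by omega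
        _ = 2 * 4 ^ (n + 1) := by ring

lemma key_real (k : ℕ) (hk : 4 ≤ k) : ((k : ℝ) + 2) * 3 ^ k < 2 * 4 ^ k := by
  have := key_nat k hk
  exact_mod_cast this

lemma lt4 (k : ℕ) (hk : 4 ≤ k) :
    ((3 : ℝ) ^ k - 2 ^ k) / 3 ^ k < ((2 : ℝ) ^ (k + 1) - k - 2) / 2 ^ (k + 1) := by
  rw [div_lt_div_iff₀ (by positivity) (by positivity)]
  have h := key_real k hk
  have h4 : (4 : ℝ) ^ k = 2 ^ k * 2 ^ k := by rw [← mul_pow]; norm_num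
  have h2 : (2 : ℝ) ^ (k + 1) = 2 * 2 ^ k := by ring
  nlinarith [pow_pos (by norm_num : (0:ℝ) < 3) k, pow_pos (by norm_num : (0:ℝ) < 2) k]

lemma B31 (k : ℕ) (hk : 1 ≤ k) : B k 3 1 = ((3 : ℝ) ^ k - 2 ^ k) / 3 ^ k := by
  obtain ⟨m, rfl⟩ := Nat.exists_eq_add_of_le hk
  unfold B
  have e1 : 1 + m + 1 - 1 = m + 1 := by omega
  have e2 : 1 + m - 1 = m := by omega
  rw [e1, e2]
  push_cast
  ring_nf

lemma B22 (k : ℕ) (hk : 1 ≤ k) : B k 2 2 = ((2 : ℝ) ^ (k + 1) - k - 2) / 2 ^ (k + 1) := by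
  obtain ⟨m, rfl⟩ := Nat.exists_eq_add_of_le hk
  unfold B
  have e1 : 1 + m + 2 - 1 = m + 1 + 1 := by omega
  have e2 : 1 + m - 1 = m := by omega
  rw [e1, e2]
  push_cast
  norm_num
  ring_nf

theorem stmt_16 :
    (B 2 3 1 > B 2 2 2 ∧ B 3 3 1 > B 3 2 2) ∧
      (∀ k : ℕ, 4 ≤ k → B k 3 1 < B k 2 2) ∧
      (∀ k : ℕ, 2 ≤ k →
        (((3 : ℝ) ^ k - 2 ^ k) / 3 ^ k > ((2 : ℝ) ^ (k + 1) - k - 2) / 2 ^ (k + 1)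
          ↔ k = 2 ∨ k = 3)) := by
  refine ⟨⟨?_, ?_⟩, ?_, ?_⟩
  · norm_num [B]
  · norm_num [B]
  · intro k hk
    rw [B31 k (by omega), B22 k (by omega)]
    exact lt4 k hk
  · intro k hk
    constructor
    · intro h
      by_contra hc
      push_neg at hc
      have h4 : 4 ≤ k := by omega
      have := lt4 k h4
      linarith
    · rintro (rfl | rfl) <;> norm_num
end
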